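/- Let n, m be unit vectors in R^3 with |n - m| ≤ h and B = (I - n n^T)(I - m m^T) + n m^T. Then ‖I - B B^T‖ ≤ C h^2 for an absolute constant C, where ‖·‖ is the operator norm. -/

import Mathlib

open Matrix

private lemma vv_mul (a b c d : Fin 3 → ℝ) :
    vecMulVec a b * vecMulVec c d = (b ⬝ᵥ c) • vecMulVec a d := by
  ext i j
  simp [mul_apply, vecMulVec_apply, dotProduct, Fin.sum_univ_three]
  ring

private lemma vv_transpose (a b : Fin 3 → ℝ) :
    (vecMulVec a b)ᵀ = vecMulVec b a := by
  ext i j; simp [vecMulVec_apply, transpose_apply, mul_comm]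

private lemma vv_mulVec (a b x : Fin 3 → ℝ) :
    (vecMulVec a b).mulVec x = (b ⬝ᵥ x) • a := by
  ext i; simp [mulVec, vecMulVec_apply, dotProduct, Fin.sum_univ_three]; ring

private lemma dp_self_nonneg (x : Fin 3 → ℝ) : 0 ≤ x ⬝ᵥ x :=
  Finset.sum_nonneg fun _ _ => mul_self_nonneg _

/-- There is an absolute constant `C > 0` such that for all unit vectors `n, m ∈ ℝ³` with
`|n - m| ≤ h` and `B = (I - n nᵀ)(I - m mᵀ) + n mᵀ`, the operator norm of `I - B Bᵀ`
is at most `C h²`. -/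
theorem stmt5 :
    ∃ C : ℝ, 0 < C ∧
      ∀ (n m : Fin 3 → ℝ) (h : ℝ) (B : Matrix (Fin 3) (Fin 3) ℝ),
        n ⬝ᵥ n = 1 → m ⬝ᵥ m = 1 →
        Real.sqrt ((n - m) ⬝ᵥ (n - m)) ≤ h →
        B = (1 - vecMulVec n n) * (1 - vecMulVec m m) + vecMulVec n m →
        ‖Matrix.toEuclideanCLM (𝕜 := ℝ) (n := Fin 3) (1 - B * Bᵀ)‖ ≤ C * h ^ 2 := by
  refine ⟨1, one_pos, fun n m h B hn hm hnm hB => ?_⟩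
  have hn' : n 0 * n 0 + n 1 * n 1 + n 2 * n 2 = 1 := by
    simpa [dotProduct, Fin.sum_univ_three] using hn
  have hm' : m 0 * m 0 + m 1 * m 1 + m 2 * m 2 = 1 := by
    simpa [dotProduct, Fin.sum_univ_three] using hm
  set t : ℝ := n ⬝ᵥ m with ht
  have ht' : t = n 0 * m 0 + n 1 * m 1 + n 2 * m 2 := by
    rw [ht]; simp [dotProduct, Fin.sum_univ_three]
  have hmn : m ⬝ᵥ n = t := by rw [ht, dotProduct_comm]
  -- the key algebraic identity
  set v : Fin 3 → ℝ := t • n - m with hv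
  have key : 1 - B * Bᵀ = vecMulVec v v := by
    have hBt : Bᵀ = (1 - vecMulVec m m) * (1 - vecMulVec n n) + vecMulVec m n := by
      rw [hB]; simp [transpose_add, transpose_mul, vv_transpose]
    rw [hBt, hB]
    have e1 : vecMulVec n n * vecMulVec m m = t • vecMulVec n m := by rw [vv_mul, ← ht]
    have e2 : vecMulVec m m * vecMulVec n n = t • vecMulVec m n := by rw [vv_mul, hmn]
    have e3 : vecMulVec n n * vecMulVec n n = vecMulVec n n := by rw [vv_mul, hn, one_smul]
    have e4 : vecMulVec m m * vecMulVec m m = vecMulVec m m := by rw [vv_mul, hm, one_smul]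
    have e6 : vecMulVec n m * vecMulVec n n = t • vecMulVec n n := by rw [vv_mul, hmn]
    have e7 : vecMulVec n m * vecMulVec m n = vecMulVec n n := by rw [vv_mul, hm, one_smul]
    have e8 : vecMulVec n n * vecMulVec m n = t • vecMulVec n n := by rw [vv_mul, ← ht]
    have e9 : vecMulVec m m * vecMulVec m n = vecMulVec m n := by rw [vv_mul, hm, one_smul]
    have e10 : vecMulVec n n * vecMulVec n m = vecMulVec n m := by rw [vv_mul, hn, one_smul]
    have e11 : vecMulVec m m * vecMulVec n m = t • vecMulVec m m := by rw [vv_mul, hmn]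
    have e12 : vecMulVec n m * vecMulVec m m = vecMulVec n m := by rw [vv_mul, hm, one_smul]
    have hvv : vecMulVec v v = t ^ 2 • vecMulVec n n + vecMulVec m m
        - t • vecMulVec n m - t • vecMulVec m n := by
      ext i j
      simp [hv, vecMulVec_apply, Matrix.sub_apply, Matrix.add_apply, Matrix.smul_apply, Pi.smul_apply, Pi.sub_apply,
        smul_eq_mul]
      ring
    rw [hvv]
    simp only [mul_add, add_mul, mul_sub, sub_mul, smul_mul_assoc, mul_smul_comm,
      one_mul, mul_one, e1, e2, e3, e4, e6, e7, e8, e9, e10, e11, e12, smul_smul]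
    module
  -- bound the dot products
  have hd : (n - m) ⬝ᵥ (n - m) ≤ h ^ 2 := by
    nlinarith [Real.sq_sqrt (dp_self_nonneg (n - m)), Real.sqrt_nonneg ((n - m) ⬝ᵥ (n - m))]
  have hexp : (n - m) ⬝ᵥ (n - m) = 2 - 2 * t := by
    simp only [dotProduct, Fin.sum_univ_three, Pi.sub_apply]
    rw [ht']; linear_combination hn' + hm'
  have hsumexp : (n + m) ⬝ᵥ (n + m) = 2 + 2 * t := by
    simp only [dotProduct, Fin.sum_univ_three, Pi.add_apply]
    rw [ht']; linear_combination hn' + hm'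
  have hvv2 : v ⬝ᵥ v = 1 - t ^ 2 := by
    simp only [hv, dotProduct, Fin.sum_univ_three, Pi.sub_apply, Pi.smul_apply, smul_eq_mul]
    linear_combination (t ^ 2) * hn' + hm' + 2 * t * ht'
  have hsum : (0 : ℝ) ≤ 2 + 2 * t := hsumexp ▸ dp_self_nonneg (n + m)
  have hd' : 2 - 2 * t ≤ h ^ 2 := hexp ▸ hd
  have hd0 : (0 : ℝ) ≤ 2 - 2 * t := hexp ▸ dp_self_nonneg (n - m)
  have hbound : v ⬝ᵥ v ≤ h ^ 2 := by rw [hvv2]; nlinarith [hd', hsum, hd0]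
  have hvvnn : 0 ≤ v ⬝ᵥ v := dp_self_nonneg v
  -- norm bound for rank-one matrix
  rw [key, one_mul]
  set v' : EuclideanSpace ℝ (Fin 3) := (WithLp.equiv 2 (Fin 3 → ℝ)).symm v with hv'
  have hnv' : ‖v'‖ ^ 2 = v ⬝ᵥ v := by
    rw [EuclideanSpace.norm_eq, Real.sq_sqrt (by positivity)]
    simp [hv', dotProduct, Fin.sum_univ_three, Real.norm_eq_abs, sq_abs, sq]
  refine le_trans (ContinuousLinearMap.opNorm_le_bound _ hvvnn fun x => ?_) hbound
  have happ : (toEuclideanCLM (𝕜 := ℝ) (n := Fin 3) (vecMulVec v v)) x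
      = (inner ℝ v' x : ℝ) • v' := by
    apply (WithLp.equiv 2 (Fin 3 → ℝ)).injective
    rw [WithLp.equiv_apply, ofLp_toEuclideanCLM]
    rw [vv_mulVec]
    simp [hv', PiLp.inner_apply, dotProduct, RCLike.inner_apply, Fin.sum_univ_three, mul_comm]
  rw [happ, norm_smul]
  calc ‖(inner ℝ v' x : ℝ)‖ * ‖v'‖ ≤ (‖v'‖ * ‖x‖) * ‖v'‖ := by
        gcongr; exact norm_inner_le_norm v' x
    _ = ‖v'‖ ^ 2 * ‖x‖ := by ring
    _ = (v ⬝ᵥ v) * ‖x‖ := by rw [hnv']
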